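/- There exists a constant c > 0 such that for every x ∈ ℝ³ with x ≠ 0, the function y ↦ |y|^{-2} |x-y|^{-2} is integrable on ℝ³ and ∫_{ℝ³} |y|^{-2} |x-y|^{-2} dy ≤ c / |x|. -/

import Mathlib

open MeasureTheory Metric Set

noncomputable section

namespace Stmt1Aux

abbrev E3 : Type := EuclideanSpace ℝ (Fin 3)

/-- the dominating radial function -/
def g0 : E3 → ℝ := fun y => (‖y‖ ^ 2)⁻¹ * min 4 ((‖y‖ ^ 2)⁻¹)

lemma g0_nonneg (y : E3) : 0 ≤ g0 y := by
  have h1 : (0:ℝ) ≤ (‖y‖ ^ 2)⁻¹ := by positivity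
  exact mul_nonneg h1 (le_min (by norm_num) h1)

lemma g0_measurable : Measurable g0 :=
  (measurable_norm.pow_const 2).inv.mul
    (measurable_const.min (measurable_norm.pow_const 2).inv)

def sIn (n : ℕ) : Set E3 := (fun y : E3 => ‖y‖) ⁻¹' Ico ((2:ℝ)⁻¹ ^ (n+1)) ((2:ℝ)⁻¹ ^ n)

def sOut (n : ℕ) : Set E3 := (fun y : E3 => ‖y‖) ⁻¹' Ico ((2:ℝ) ^ n) ((2:ℝ) ^ (n+1))

lemma cover (y : E3) (hy : y ≠ 0) : (∃ n, y ∈ sIn n) ∨ (∃ n, y ∈ sOut n) := by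
  have h0 : 0 < ‖y‖ := norm_pos_iff.2 hy
  rcases lt_or_ge ‖y‖ 1 with h1 | h1
  · left
    have hex : ∃ n : ℕ, (2:ℝ)⁻¹ ^ (n+1) ≤ ‖y‖ := by
      obtain ⟨n, hn⟩ := exists_pow_lt_of_lt_one h0 (by norm_num : (2:ℝ)⁻¹ < 1)
      exact ⟨n, le_of_lt (lt_of_le_of_lt (pow_le_pow_of_le_one (by norm_num)
        (by norm_num) (Nat.le_succ n)) hn)⟩
    classical
    refine ⟨Nat.find hex, Nat.find_spec hex, ?_⟩
    rcases Nat.eq_zero_or_pos (Nat.find hex) with h | h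
    · rw [h, pow_zero]; exact h1
    · obtain ⟨m, hm⟩ := Nat.exists_eq_add_of_lt h
      rw [zero_add] at hm
      have := Nat.find_min hex (m := m) (by omega)
      rw [hm]
      exact lt_of_not_ge this
  · right
    have hex : ∃ n : ℕ, ‖y‖ < (2:ℝ) ^ (n+1) := by
      obtain ⟨n, hn⟩ := pow_unbounded_of_one_lt ‖y‖ (by norm_num : (1:ℝ) < 2)
      exact ⟨n, hn.trans_le (pow_le_pow_right₀ (by norm_num) (Nat.le_succ n))⟩
    classical
    refine ⟨Nat.find hex, ?_, Nat.find_spec hex⟩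
    rcases Nat.eq_zero_or_pos (Nat.find hex) with h | h
    · rw [h, pow_zero]; exact h1
    · obtain ⟨m, hm⟩ := Nat.exists_eq_add_of_lt h
      rw [zero_add] at hm
      have := Nat.find_min hex (m := m) (by omega)
      rw [hm]
      exact le_of_not_gt this


lemma pow_id_in (n : ℕ) : (4:ℝ)^n * ((2:ℝ)⁻¹^n)^3 = (2:ℝ)⁻¹^n := by
  rw [pow_right_comm, ← mul_pow]
  norm_num

lemma pow_id_out (n : ℕ) : ((4:ℝ)⁻¹^n * (4:ℝ)⁻¹^n) * ((2:ℝ)^(n+1))^3 = 8 * (2:ℝ)⁻¹^n := by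
  rw [pow_right_comm, pow_succ, ← mul_assoc, ← mul_pow, ← mul_pow]
  norm_num
  ring

lemma g0_bound_in (n : ℕ) (y : E3) (hy : y ∈ sIn n) : g0 y ≤ (4:ℝ)^n * 16 := by
  obtain ⟨h1, _⟩ := hy
  have hpos : (0:ℝ) < (2:ℝ)⁻¹ ^ (n+1) := by positivity
  have hsq : ((2:ℝ)⁻¹ ^ (n+1))^2 ≤ ‖y‖^2 := by
    apply pow_le_pow_left₀ hpos.le h1
  have hinv : (‖y‖^2)⁻¹ ≤ (((2:ℝ)⁻¹ ^ (n+1))^2)⁻¹ := by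
    apply inv_anti₀ (by positivity) hsq
  have hval : ((((2:ℝ)⁻¹ ^ (n+1)))^2)⁻¹ = (4:ℝ)^(n+1) := by
    rw [pow_right_comm, ← inv_pow, ← inv_pow, inv_inv]
    norm_num
  calc g0 y ≤ (‖y‖^2)⁻¹ * 4 := by
        exact mul_le_mul_of_nonneg_left (min_le_left _ _) (by positivity)
    _ ≤ (4:ℝ)^(n+1) * 4 := by
        apply mul_le_mul_of_nonneg_right _ (by norm_num)
        rw [← hval]; exact hinv
    _ = (4:ℝ)^n * 16 := by rw [pow_succ]; ring

lemma g0_bound_out (n : ℕ) (y : E3) (hy : y ∈ sOut n) : g0 y ≤ (4:ℝ)⁻¹^n * (4:ℝ)⁻¹^n := by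
  obtain ⟨h1, _⟩ := hy
  have hpos : (0:ℝ) < (2:ℝ) ^ n := by positivity
  have hsq : ((2:ℝ) ^ n)^2 ≤ ‖y‖^2 := pow_le_pow_left₀ hpos.le h1 2
  have hinv : (‖y‖^2)⁻¹ ≤ (((2:ℝ) ^ n)^2)⁻¹ := inv_anti₀ (by positivity) hsq
  have hval : (((2:ℝ) ^ n)^2)⁻¹ = (4:ℝ)⁻¹^n := by
    rw [pow_right_comm, ← inv_pow]
    norm_num
  rw [← hval] at *
  calc g0 y ≤ (‖y‖^2)⁻¹ * (‖y‖^2)⁻¹ := by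
        exact mul_le_mul_of_nonneg_left (min_le_right _ _) (by positivity)
    _ ≤ (((2:ℝ) ^ n)^2)⁻¹ * (((2:ℝ) ^ n)^2)⁻¹ := by
        exact mul_le_mul hinv hinv (by positivity) (by positivity)

lemma vol_sIn (n : ℕ) : volume (sIn n) ≤
    ENNReal.ofReal (((2:ℝ)⁻¹ ^ n)^3) * volume (ball (0:E3) 1) := by
  have hsub : sIn n ⊆ ball (0:E3) ((2:ℝ)⁻¹ ^ n) := by
    intro y hy
    rw [mem_ball_zero_iff]
    exact hy.2
  refine (measure_mono hsub).trans ?_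
  rw [Measure.addHaar_ball_of_pos volume 0 (by positivity : (0:ℝ) < (2:ℝ)⁻¹ ^ n)]
  rw [finrank_euclideanSpace_fin]

lemma vol_sOut (n : ℕ) : volume (sOut n) ≤
    ENNReal.ofReal (((2:ℝ) ^ (n+1))^3) * volume (ball (0:E3) 1) := by
  have hsub : sOut n ⊆ ball (0:E3) ((2:ℝ) ^ (n+1)) := by
    intro y hy
    rw [mem_ball_zero_iff]
    exact hy.2
  refine (measure_mono hsub).trans ?_
  rw [Measure.addHaar_ball_of_pos volume 0 (by positivity : (0:ℝ) < (2:ℝ) ^ (n+1))]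
  rw [finrank_euclideanSpace_fin]


lemma sIn_meas (n : ℕ) : MeasurableSet (sIn n) := measurable_norm measurableSet_Ico

lemma sOut_meas (n : ℕ) : MeasurableSet (sOut n) := measurable_norm measurableSet_Ico

lemma term_in (n : ℕ) : ∫⁻ y in sIn n, ENNReal.ofReal (g0 y) ≤
    ENNReal.ofReal (16 * (2:ℝ)⁻¹^n) * volume (ball (0:E3) 1) := by
  calc ∫⁻ y in sIn n, ENNReal.ofReal (g0 y)
      ≤ ∫⁻ _ in sIn n, ENNReal.ofReal ((4:ℝ)^n * 16) := by
        apply setLIntegral_mono measurable_const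
        exact fun y hy => ENNReal.ofReal_le_ofReal (g0_bound_in n y hy)
    _ = ENNReal.ofReal ((4:ℝ)^n * 16) * volume (sIn n) := setLIntegral_const _ _
    _ ≤ ENNReal.ofReal ((4:ℝ)^n * 16) *
        (ENNReal.ofReal (((2:ℝ)⁻¹ ^ n)^3) * volume (ball (0:E3) 1)) :=
        mul_le_mul_right (vol_sIn n) _
    _ = ENNReal.ofReal (16 * (2:ℝ)⁻¹^n) * volume (ball (0:E3) 1) := by
        rw [← mul_assoc, ← ENNReal.ofReal_mul (by positivity)]
        congr 2
        calc (4:ℝ)^n * 16 * ((2:ℝ)⁻¹ ^ n)^3 = 16 * ((4:ℝ)^n * ((2:ℝ)⁻¹^n)^3) := by ring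
          _ = 16 * (2:ℝ)⁻¹^n := by rw [pow_id_in]

lemma term_out (n : ℕ) : ∫⁻ y in sOut n, ENNReal.ofReal (g0 y) ≤
    ENNReal.ofReal (8 * (2:ℝ)⁻¹^n) * volume (ball (0:E3) 1) := by
  calc ∫⁻ y in sOut n, ENNReal.ofReal (g0 y)
      ≤ ∫⁻ _ in sOut n, ENNReal.ofReal ((4:ℝ)⁻¹^n * (4:ℝ)⁻¹^n) := by
        apply setLIntegral_mono measurable_const
        exact fun y hy => ENNReal.ofReal_le_ofReal (g0_bound_out n y hy)
    _ = ENNReal.ofReal ((4:ℝ)⁻¹^n * (4:ℝ)⁻¹^n) * volume (sOut n) := setLIntegral_const _ _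
    _ ≤ ENNReal.ofReal ((4:ℝ)⁻¹^n * (4:ℝ)⁻¹^n) *
        (ENNReal.ofReal (((2:ℝ) ^ (n+1))^3) * volume (ball (0:E3) 1)) :=
        mul_le_mul_right (vol_sOut n) _
    _ = ENNReal.ofReal (8 * (2:ℝ)⁻¹^n) * volume (ball (0:E3) 1) := by
        rw [← mul_assoc, ← ENNReal.ofReal_mul (by positivity)]
        rw [pow_id_out]

lemma sum_aux (c : ℝ) (hc : 0 ≤ c) :
    ∑' n : ℕ, ENNReal.ofReal (c * (2:ℝ)⁻¹^n) * volume (ball (0:E3) 1) < ⊤ := by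
  rw [ENNReal.tsum_mul_right, ← ENNReal.ofReal_tsum_of_nonneg
    (fun n => by positivity)
    ((summable_geometric_of_lt_one (by norm_num) (by norm_num)).mul_left c)]
  exact ENNReal.mul_lt_top ENNReal.ofReal_lt_top measure_ball_lt_top

lemma g0_integrable : Integrable g0 (volume : Measure E3) := by
  refine ⟨g0_measurable.aestronglyMeasurable, ?_⟩
  rw [hasFiniteIntegral_iff_ofReal (ae_of_all _ g0_nonneg)]
  calc ∫⁻ y, ENNReal.ofReal (g0 y)
      = ∫⁻ y in ({(0:E3)}ᶜ : Set E3), ENNReal.ofReal (g0 y) := by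
        rw [MeasureTheory.restrict_compl_singleton]
    _ ≤ ∫⁻ y in (⋃ n, sIn n) ∪ (⋃ n, sOut n), ENNReal.ofReal (g0 y) := by
        apply lintegral_mono_set
        intro y hy
        rcases cover y hy with ⟨n, hn⟩ | ⟨n, hn⟩
        · exact Or.inl (mem_iUnion.2 ⟨n, hn⟩)
        · exact Or.inr (mem_iUnion.2 ⟨n, hn⟩)
    _ ≤ (∫⁻ y in ⋃ n, sIn n, ENNReal.ofReal (g0 y)) +
        (∫⁻ y in ⋃ n, sOut n, ENNReal.ofReal (g0 y)) := lintegral_union_le _ _ _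
    _ < ⊤ := by
        apply ENNReal.add_lt_top.2
        constructor
        · refine lt_of_le_of_lt ((lintegral_iUnion_le _ _).trans
            (ENNReal.tsum_le_tsum term_in)) (sum_aux 16 (by norm_num))
        · refine lt_of_le_of_lt ((lintegral_iUnion_le _ _).trans
            (ENNReal.tsum_le_tsum term_out)) (sum_aux 8 (by norm_num))


lemma key_ineq {a b : ℝ} (hb : 0 ≤ b) (hab : 1 ≤ a + b) (h : b ≤ a) :
    (b^2)⁻¹ * (a^2)⁻¹ ≤ (b^2)⁻¹ * min 4 ((b^2)⁻¹) := by
  rcases eq_or_lt_of_le hb with rfl | hb'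
  · simp
  · have ha : 0 < a := lt_of_lt_of_le hb' h
    apply mul_le_mul_of_nonneg_left _ (by positivity)
    apply le_min
    · have h14 : (1:ℝ)/4 ≤ a^2 := by nlinarith
      calc (a^2)⁻¹ ≤ ((1:ℝ)/4)⁻¹ := inv_anti₀ (by norm_num) h14
        _ = 4 := by norm_num
    · exact inv_anti₀ (by positivity) (by nlinarith)

lemma f0_le (e₀ : E3) (he : ‖e₀‖ = 1) (y : E3) :
    (‖y‖^2)⁻¹ * (‖e₀ - y‖^2)⁻¹ ≤ g0 y + g0 (e₀ - y) := by
  have h1 : (1:ℝ) ≤ ‖e₀ - y‖ + ‖y‖ := by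
    calc (1:ℝ) = ‖e₀‖ := he.symm
      _ = ‖(e₀ - y) + y‖ := by rw [sub_add_cancel]
      _ ≤ ‖e₀ - y‖ + ‖y‖ := norm_add_le _ _
  rcases le_total ‖y‖ ‖e₀ - y‖ with h | h
  · have hk := key_ineq (norm_nonneg y) (by linarith) h
    exact hk.trans (le_add_of_nonneg_right (g0_nonneg _))
  · have hk := key_ineq (norm_nonneg (e₀ - y)) (by linarith) h
    calc (‖y‖^2)⁻¹ * (‖e₀ - y‖^2)⁻¹ = (‖e₀ - y‖^2)⁻¹ * (‖y‖^2)⁻¹ := mul_comm _ _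
      _ ≤ g0 (e₀ - y) := hk
      _ ≤ g0 y + g0 (e₀ - y) := le_add_of_nonneg_left (g0_nonneg _)

lemma f0_integrable (e₀ : E3) (he : ‖e₀‖ = 1) :
    Integrable (fun y : E3 => (‖y‖^2)⁻¹ * (‖e₀ - y‖^2)⁻¹) (volume : Measure E3) := by
  have hg := g0_integrable
  have hg2 : Integrable (fun y : E3 => g0 (e₀ - y)) (volume : Measure E3) :=
    (integrable_comp_sub_left g0 e₀).2 hg
  apply Integrable.mono' (hg.add hg2)
  · apply Measurable.aestronglyMeasurable
    exact (measurable_norm.pow_const 2).inv.mul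
      (((measurable_const.sub measurable_id).norm.pow_const 2).inv)
  · filter_upwards with y
    rw [Real.norm_of_nonneg (by positivity)]
    exact f0_le e₀ he y

end Stmt1Aux

open Stmt1Aux

theorem stmt_1 :
    ∃ c > 0, ∀ x : EuclideanSpace ℝ (Fin 3), x ≠ 0 →
      Integrable (fun y : EuclideanSpace ℝ (Fin 3) => (‖y‖ ^ 2)⁻¹ * (‖x - y‖ ^ 2)⁻¹) volume ∧
      (∫ y : EuclideanSpace ℝ (Fin 3), (‖y‖ ^ 2)⁻¹ * (‖x - y‖ ^ 2)⁻¹) ≤ c / ‖x‖ := by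
  classical
  set e₀ : E3 := EuclideanSpace.single 0 1 with he₀def
  have he₀ : ‖e₀‖ = 1 := by
    rw [he₀def, EuclideanSpace.norm_single]
    norm_num
  have hI : Integrable (fun y : E3 => (‖y‖^2)⁻¹ * (‖e₀ - y‖^2)⁻¹) (volume : Measure E3) :=
    f0_integrable e₀ he₀
  set J : ℝ := ∫ y : E3, (‖y‖^2)⁻¹ * (‖e₀ - y‖^2)⁻¹ with hJdef
  have hJ0 : 0 ≤ J := integral_nonneg (fun y => by positivity)
  refine ⟨J + 1, by linarith, ?_⟩
  intro x hx
  have hR : 0 < ‖x‖ := norm_pos_iff.2 hx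
  set R : ℝ := ‖x‖ with hRdef
  have hRne : R ≠ 0 := ne_of_gt hR
  set u : E3 := R⁻¹ • x with hudef
  have hu : ‖u‖ = 1 := by
    rw [hudef, norm_smul, norm_inv, norm_norm, ← hRdef, inv_mul_cancel₀ hRne]
  set T : E3 ≃ₗᵢ[ℝ] E3 := Submodule.reflection (ℝ ∙ (e₀ - u))ᗮ with hTdef
  have hT : T e₀ = u := Submodule.reflection_sub (by rw [he₀, hu])
  have hrepr : ∀ y : E3, (‖y‖^2)⁻¹ * (‖x - y‖^2)⁻¹ =
      (R^4)⁻¹ * ((‖T.symm (R⁻¹ • y)‖^2)⁻¹ * (‖e₀ - T.symm (R⁻¹ • y)‖^2)⁻¹) := by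
    intro y
    have h1 : ‖T.symm (R⁻¹ • y)‖ = R⁻¹ * ‖y‖ := by
      rw [T.symm.norm_map, norm_smul, norm_inv, norm_norm]
    have h2 : ‖e₀ - T.symm (R⁻¹ • y)‖ = R⁻¹ * ‖x - y‖ := by
      calc ‖e₀ - T.symm (R⁻¹ • y)‖ = ‖T (e₀ - T.symm (R⁻¹ • y))‖ := (T.norm_map _).symm
        _ = ‖T e₀ - R⁻¹ • y‖ := by rw [map_sub, T.apply_symm_apply]
        _ = ‖R⁻¹ • (x - y)‖ := by rw [hT, hudef, smul_sub]
        _ = R⁻¹ * ‖x - y‖ := by rw [norm_smul, norm_inv, norm_norm]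
    rw [h1, h2,
      show ((R⁻¹ * ‖y‖)^2)⁻¹ = R^2 * (‖y‖^2)⁻¹ by rw [mul_pow, mul_inv, inv_pow, inv_inv],
      show ((R⁻¹ * ‖x - y‖)^2)⁻¹ = R^2 * (‖x - y‖^2)⁻¹ by
        rw [mul_pow, mul_inv, inv_pow, inv_inv],
      show (R^4)⁻¹ * ((R^2 * (‖y‖^2)⁻¹) * (R^2 * (‖x - y‖^2)⁻¹)) =
        ((R^4)⁻¹ * (R^2 * R^2)) * ((‖y‖^2)⁻¹ * (‖x - y‖^2)⁻¹) from by ring,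
      show (R^4)⁻¹ * (R^2 * R^2) = 1 from by field_simp, one_mul]
  have hmeas : Integrable
      (fun y : E3 => (‖T.symm y‖^2)⁻¹ * (‖e₀ - T.symm y‖^2)⁻¹) (volume : Measure E3) := by
    have := (T.symm.measurePreserving.integrable_comp_emb
      T.symm.toMeasurableEquiv.measurableEmbedding
      (g := fun z : E3 => (‖z‖^2)⁻¹ * (‖e₀ - z‖^2)⁻¹)).2 hI
    exact this
  have hint : Integrable
      (fun y : E3 => (‖T.symm (R⁻¹ • y)‖^2)⁻¹ * (‖e₀ - T.symm (R⁻¹ • y)‖^2)⁻¹)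
      (volume : Measure E3) :=
    hmeas.comp_smul (inv_ne_zero hRne)
  constructor
  · exact (hint.const_mul ((R^4)⁻¹)).congr (ae_of_all _ fun y => (hrepr y).symm)
  · have hstep1 : (∫ y : E3, (‖y‖^2)⁻¹ * (‖x - y‖^2)⁻¹) =
        (R^4)⁻¹ * ∫ y : E3, (‖T.symm (R⁻¹ • y)‖^2)⁻¹ * (‖e₀ - T.symm (R⁻¹ • y)‖^2)⁻¹ := by
      simp_rw [hrepr]
      exact integral_const_mul _ _
    have hstep2 : (∫ y : E3, (‖T.symm (R⁻¹ • y)‖^2)⁻¹ * (‖e₀ - T.symm (R⁻¹ • y)‖^2)⁻¹)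
        = R^3 * J := by
      rw [MeasureTheory.Measure.integral_comp_inv_smul_of_nonneg (volume : Measure E3)
        (fun z : E3 => (‖T.symm z‖^2)⁻¹ * (‖e₀ - T.symm z‖^2)⁻¹) hR.le]
      rw [finrank_euclideanSpace_fin, smul_eq_mul]
      congr 1
      exact T.symm.measurePreserving.integral_comp T.symm.toMeasurableEquiv.measurableEmbedding
        (fun z : E3 => (‖z‖^2)⁻¹ * (‖e₀ - z‖^2)⁻¹)
    rw [hstep1, hstep2]
    have heq : (R^4)⁻¹ * (R^3 * J) = J / R := by
      field_simp
    rw [heq]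
    gcongr
    linarith
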